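/- For every integer q ≥ 2, the function α_HS on [0,1], defined by α_HS(x) = 1 − H_q(x/2) for x ∈ [0, 2/q] and α_HS(x) = (1−x) log_q(q−1) for x ∈ [2/q, 1], is convex on [0,1], continuously differentiable on (0,1), and satisfies α_HS(x) ≤ 1 − H_q(x/2) (the Hamming bound) and α_HS(x) ≤ 1 − x (the Singleton bound) for all x ∈ [0,1]. -/

import Mathlib

open Filter Real Set

/-- The q-ary entropy function. -/
noncomputable def qEntropy (q : ℕ) (x : ℝ) : ℝ :=
  x * Real.logb q (((q : ℝ) - 1) / x) + (1 - x) * Real.logb q (1 / (1 - x))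

/-- The hybrid Hamming-Singleton bound `α_HS`. -/
noncomputable def alphaHS (q : ℕ) (x : ℝ) : ℝ :=
  if x ≤ 2 / (q : ℝ) then 1 - qEntropy q (x / 2) else (1 - x) * Real.logb q ((q : ℝ) - 1)

lemma qEntropy_eq (q : ℕ) (hq : 2 ≤ q) (y : ℝ) :
    qEntropy q y = Real.qaryEntropy q y / Real.log q := by
  have hq1 : (1:ℝ) < q := by exact_mod_cast hq.trans_lt' one_lt_two
  have hqm : ((q:ℝ) - 1) ≠ 0 := by linarith
  rcases eq_or_ne y 0 with rfl | hy0
  · simp [qEntropy]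
  rcases eq_or_ne y 1 with rfl | hy1
  · simp [qEntropy, Real.qaryEntropy, Real.binEntropy, Real.logb]
  · have h1y : (1:ℝ) - y ≠ 0 := sub_ne_zero.2 (Ne.symm hy1)
    unfold qEntropy Real.qaryEntropy Real.binEntropy
    rw [Real.logb, Real.logb, Real.log_div hqm hy0, one_div, Real.log_inv, Real.log_inv]
    push_cast
    field_simp
    ring

noncomputable def fAux (q : ℕ) (x : ℝ) : ℝ := 1 - Real.qaryEntropy q (x/2) / Real.log q
noncomputable def LAux (q : ℕ) (x : ℝ) : ℝ := (1-x) * (Real.log ((q:ℝ)-1) / Real.log q)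
noncomputable def gAux (q : ℕ) (x : ℝ) : ℝ :=
  -((Real.log ((q:ℝ)-1) + Real.log (1 - x/2) - Real.log (x/2)) / (2 * Real.log q))
noncomputable def DAux (q : ℕ) (x : ℝ) : ℝ :=
  min (gAux q x) (-(Real.log ((q:ℝ)-1) / Real.log q))

lemma alphaHS_eq (q : ℕ) (hq : 2 ≤ q) :
    alphaHS q = fun x => if x ≤ 2/(q:ℝ) then fAux q x else LAux q x := by
  funext x
  simp only [alphaHS, fAux, LAux, qEntropy_eq q hq, Real.logb]

lemma junction (q : ℕ) (hq : 2 ≤ q) : fAux q (2/(q:ℝ)) = LAux q (2/(q:ℝ)) := by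
  have hq1 : (1:ℝ) < q := by exact_mod_cast hq.trans_lt' one_lt_two
  have hq0 : (q:ℝ) ≠ 0 := by linarith
  have hlq : Real.log q ≠ 0 := ne_of_gt (Real.log_pos hq1)
  have h2 : (2:ℝ)/(q:ℝ)/2 = 1/q := by field_simp
  have h3 : (1:ℝ) - 1/q = ((q:ℝ)-1)/q := by field_simp
  have hE : Real.qaryEntropy q ((2:ℝ)/(q:ℝ)/2)
      = Real.log q + (2/q - 1) * Real.log ((q:ℝ)-1) := by
    rw [h2]
    unfold Real.qaryEntropy Real.binEntropy
    push_cast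
    rw [h3, Real.log_inv, Real.log_inv, Real.log_div (by linarith : ((q:ℝ)-1) ≠ 0) hq0,
      Real.log_div one_ne_zero hq0, Real.log_one]
    field_simp
    ring
  unfold fAux LAux
  rw [hE]
  field_simp
  ring

lemma g_at (q : ℕ) (hq : 2 ≤ q) :
    gAux q (2/(q:ℝ)) = -(Real.log ((q:ℝ)-1) / Real.log q) := by
  have hq1 : (1:ℝ) < q := by exact_mod_cast hq.trans_lt' one_lt_two
  have hq0 : (q:ℝ) ≠ 0 := by linarith
  have h2 : (2:ℝ)/(q:ℝ)/2 = 1/q := by field_simp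
  unfold gAux
  rw [h2, show (1:ℝ) - 1/q = ((q:ℝ)-1)/q by field_simp,
    Real.log_div (by linarith) hq0, Real.log_div (by norm_num) hq0, Real.log_one]
  ring

lemma hasDerivAt_fAux (q : ℕ) (hq : 2 ≤ q) {x : ℝ} (h0 : 0 < x) (h2 : x < 2) :
    HasDerivAt (fAux q) (gAux q x) x := by
  have hp0 : x/2 ≠ 0 := by positivity
  have hp1 : x/2 ≠ 1 := by intro h; nlinarith [h]
  have h1 : HasDerivAt (fun x : ℝ => x/2) (1/2) x := by
    simpa using (hasDerivAt_id x).div_const 2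
  have h := ((Real.hasDerivAt_qaryEntropy (q := q) hp0 hp1).comp x h1).div_const (Real.log q)
  have h' := (hasDerivAt_const x (1:ℝ)).sub h
  refine h'.congr_deriv ?_
  unfold gAux
  push_cast
  ring

lemma qary_at_inv (q : ℕ) (hq : 2 ≤ q) :
    Real.qaryEntropy q (1/(q:ℝ)) = Real.log q + (2/(q:ℝ) - 1) * Real.log ((q:ℝ)-1) := by
  have hq1 : (1:ℝ) < q := by exact_mod_cast hq.trans_lt' one_lt_two
  have hq0 : (q:ℝ) ≠ 0 := by linarith
  unfold Real.qaryEntropy Real.binEntropy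
  push_cast
  rw [show (1:ℝ) - 1/q = ((q:ℝ)-1)/q by field_simp, Real.log_inv, Real.log_inv,
    Real.log_div (by linarith : ((q:ℝ)-1) ≠ 0) hq0, Real.log_div one_ne_zero hq0, Real.log_one]
  field_simp
  ring

lemma g_mono (q : ℕ) (hq : 2 ≤ q) : MonotoneOn (gAux q) (Ioc 0 1) := by
  have hq1 : (1:ℝ) < q := by exact_mod_cast hq.trans_lt' one_lt_two
  have hLq : 0 < Real.log q := Real.log_pos hq1
  intro x hx y hy hxy
  have h1 : Real.log (x/2) ≤ Real.log (y/2) :=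
    Real.log_le_log (by linarith [hx.1]) (by linarith)
  have h2 : Real.log (1 - y/2) ≤ Real.log (1 - x/2) :=
    Real.log_le_log (by nlinarith [hy.2]) (by linarith)
  unfold gAux
  have h2Lq : (0:ℝ) < 2 * Real.log q := by positivity
  exact neg_le_neg ((div_le_div_iff_of_pos_right h2Lq).mpr (by linarith))

lemma hasDerivAt_LAux (q : ℕ) (y : ℝ) :
    HasDerivAt (LAux q) (-(Real.log ((q:ℝ)-1) / Real.log q)) y := by
  have h := ((hasDerivAt_id y).const_sub 1).mul_const (Real.log ((q:ℝ)-1) / Real.log q)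
  refine h.congr_deriv ?_
  ring

lemma hasDerivAt_alphaHS (q : ℕ) (hq : 2 ≤ q) {x : ℝ} (hx : x ∈ Ioo (0:ℝ) 1) :
    HasDerivAt (alphaHS q) (DAux q x) x := by
  have hq1 : (1:ℝ) < q := by exact_mod_cast hq.trans_lt' one_lt_two
  have hq2 : (2:ℝ) ≤ q := by exact_mod_cast hq
  have ha0 : 0 < 2/(q:ℝ) := by positivity
  have ha1 : 2/(q:ℝ) ≤ 1 := by rw [div_le_one (by linarith)]; linarith
  rw [alphaHS_eq q hq]
  rcases lt_trichotomy x (2/(q:ℝ)) with hlt | heq | hgt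
  · have hev : (fun y => if y ≤ 2/(q:ℝ) then fAux q y else LAux q y) =ᶠ[nhds x] fAux q := by
      filter_upwards [Iio_mem_nhds hlt] with y hy
      simp only [mem_Iio] at hy
      rw [if_pos hy.le]
    have hD : DAux q x = gAux q x := by
      apply min_eq_left
      rw [← g_at q hq]
      exact g_mono q hq ⟨hx.1, hx.2.le⟩ ⟨ha0, ha1⟩ hlt.le
    rw [hD]
    exact (hasDerivAt_fAux q hq hx.1 (by linarith [hx.2])).congr_of_eventuallyEq hev
  · have hfa : HasDerivAt (fAux q) (-(Real.log ((q:ℝ)-1) / Real.log q)) x := by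
      rw [heq, ← g_at q hq]
      exact hasDerivAt_fAux q hq ha0 (by linarith)
    have hf : HasDerivWithinAt (fun y => if y ≤ 2/(q:ℝ) then fAux q y else LAux q y)
        (-(Real.log ((q:ℝ)-1) / Real.log q)) (Iic x) x := by
      refine (hfa.hasDerivWithinAt).congr (fun y hy => ?_) (by simp [heq])
      simp only [mem_Iic] at hy
      simp [heq ▸ hy]
    have hg : HasDerivWithinAt (fun y => if y ≤ 2/(q:ℝ) then fAux q y else LAux q y)
        (-(Real.log ((q:ℝ)-1) / Real.log q)) (Ici x) x := by
      refine ((hasDerivAt_LAux q x).hasDerivWithinAt).congr (fun y hy => ?_)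
        (by simp [heq, junction q hq])
      simp only [mem_Ici] at hy
      rcases eq_or_lt_of_le hy with rfl | hlt
      · simp [heq, junction q hq]
      · rw [if_neg (by rw [heq] at hlt; linarith)]
    have := (hf.union hg)
    rw [Iic_union_Ici] at this
    have hD : DAux q x = -(Real.log ((q:ℝ)-1) / Real.log q) := by
      unfold DAux
      rw [heq, g_at q hq, min_self]
    rw [hD]
    exact this.hasDerivAt (by simp)
  · have hev : (fun y => if y ≤ 2/(q:ℝ) then fAux q y else LAux q y) =ᶠ[nhds x] LAux q := by
      filter_upwards [Ioi_mem_nhds hgt] with y hy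
      simp only [mem_Ioi] at hy
      rw [if_neg (by linarith)]
    have hD : DAux q x = -(Real.log ((q:ℝ)-1) / Real.log q) := by
      apply min_eq_right
      rw [← g_at q hq]
      exact g_mono q hq ⟨ha0, ha1⟩ ⟨hx.1, hx.2.le⟩ hgt.le
    rw [hD]
    exact (hasDerivAt_LAux q x).congr_of_eventuallyEq hev

theorem stmt1 (q : ℕ) (hq : 2 ≤ q) :
    ConvexOn ℝ (Set.Icc (0 : ℝ) 1) (alphaHS q) ∧
    ContDiffOn ℝ 1 (alphaHS q) (Set.Ioo (0 : ℝ) 1) ∧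
    (∀ x ∈ Set.Icc (0 : ℝ) 1, alphaHS q x ≤ 1 - qEntropy q (x / 2)) ∧
    (∀ x ∈ Set.Icc (0 : ℝ) 1, alphaHS q x ≤ 1 - x) := by
  have hq1 : (1:ℝ) < q := by exact_mod_cast hq.trans_lt' one_lt_two
  have hq2 : (2:ℝ) ≤ q := by exact_mod_cast hq
  have hLq : 0 < Real.log q := Real.log_pos hq1
  have hlog : Real.log ((q:ℝ)-1) ≤ Real.log q := Real.log_le_log (by linarith) (by linarith)
  have hlog0 : 0 ≤ Real.log ((q:ℝ)-1) := Real.log_nonneg (by linarith)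
  have ha0 : 0 < 2/(q:ℝ) := by positivity
  have ha1 : 2/(q:ℝ) ≤ 1 := by rw [div_le_one (by linarith)]; linarith
  -- continuity of alphaHS
  have hfc : Continuous (fAux q) := by
    unfold fAux
    fun_prop
  have hLc : Continuous (LAux q) := by unfold LAux; fun_prop
  have hcont : Continuous (alphaHS q) := by
    rw [alphaHS_eq q hq]
    exact Continuous.if_le hfc hLc continuous_id continuous_const
      (fun x hx => by rw [hx]; exact junction q hq)
  -- convexity
  have hconv : ConvexOn ℝ (Set.Icc (0 : ℝ) 1) (alphaHS q) := by
    apply MonotoneOn.convexOn_of_deriv (convex_Icc 0 1) hcont.continuousOn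
    · rw [interior_Icc]
      exact fun x hx => (hasDerivAt_alphaHS q hq hx).differentiableAt.differentiableWithinAt
    · rw [interior_Icc]
      intro x hx y hy hxy
      rw [(hasDerivAt_alphaHS q hq hx).deriv, (hasDerivAt_alphaHS q hq hy).deriv]
      exact min_le_min (g_mono q hq ⟨hx.1, hx.2.le⟩ ⟨hy.1, hy.2.le⟩ hxy) le_rfl
  refine ⟨hconv, ?_, ?_, ?_⟩
  · -- C¹
    have c1 : ContinuousOn (fun x : ℝ => Real.log (1 - x/2)) (Set.Ioo (0:ℝ) 1) :=
      ContinuousOn.log (by fun_prop) (fun x hx => by nlinarith [hx.2])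
    have c2 : ContinuousOn (fun x : ℝ => Real.log (x/2)) (Set.Ioo (0:ℝ) 1) :=
      ContinuousOn.log (by fun_prop) (fun x hx => by nlinarith [hx.1])
    have hgc : ContinuousOn (gAux q) (Set.Ioo (0:ℝ) 1) := by
      unfold gAux
      exact (((continuousOn_const.add c1).sub c2).div_const _).neg
    have hDc : ContinuousOn (DAux q) (Set.Ioo (0:ℝ) 1) := by
      unfold DAux
      exact continuous_min.comp_continuousOn (hgc.prodMk continuousOn_const)
    rw [show (1 : WithTop ℕ∞) = 0 + 1 from (zero_add 1).symm,
      contDiffOn_succ_iff_deriv_of_isOpen isOpen_Ioo]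
    refine ⟨fun x hx => (hasDerivAt_alphaHS q hq hx).differentiableAt.differentiableWithinAt,
      by simp, ?_⟩
    rw [contDiffOn_zero]
    exact hDc.congr fun x hx => (hasDerivAt_alphaHS q hq hx).deriv
  · -- Hamming
    intro x hx
    have hax : alphaHS q x = if x ≤ 2/(q:ℝ) then fAux q x else LAux q x := by
      rw [alphaHS_eq q hq]
    have hgoal : alphaHS q x ≤ fAux q x := by
      rw [hax]
      by_cases hxa : x ≤ 2/(q:ℝ)
      · rw [if_pos hxa]
      · rw [if_neg hxa]
        push_neg at hxa
        have hφ : MonotoneOn (fun y => fAux q y - LAux q y) (Set.Icc (2/(q:ℝ)) 1) := by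
          apply monotoneOn_of_deriv_nonneg (convex_Icc _ _) ((hfc.sub hLc).continuousOn)
          · rw [interior_Icc]
            intro y hy
            exact ((hasDerivAt_fAux q hq (by linarith [hy.1]) (by linarith [hy.2])).sub
              (hasDerivAt_LAux q y)).differentiableAt.differentiableWithinAt
          · rw [interior_Icc]
            intro y hy
            rw [((hasDerivAt_fAux q hq (by linarith [hy.1]) (by linarith [hy.2])).sub
              (hasDerivAt_LAux q y)).deriv]
            have := g_mono q hq ⟨ha0, ha1⟩ ⟨by linarith [hy.1], hy.2.le⟩ hy.1.le
            rw [g_at q hq] at this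
            linarith
        have h0 := hφ ⟨le_refl _, ha1⟩ ⟨hxa.le, hx.2⟩ hxa.le
        have hj := junction q hq
        simp only at h0
        linarith
    rw [qEntropy_eq q hq]
    exact hgoal
  · -- Singleton
    intro x hx
    have hax : alphaHS q x = if x ≤ 2/(q:ℝ) then fAux q x else LAux q x := by
      rw [alphaHS_eq q hq]
    rw [hax]
    by_cases hxa : x ≤ 2/(q:ℝ)
    · rw [if_pos hxa]
      have hE : Real.qaryEntropy q (1/(q:ℝ)) = Real.log q + (2/(q:ℝ) - 1) * Real.log ((q:ℝ)-1) :=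
        qary_at_inv q hq
      have hq0 : (0:ℝ) < q := by linarith
      have hx0 : (0:ℝ) ≤ x := hx.1
      set t : ℝ := (q:ℝ) * x / 2 with ht
      have ht0 : 0 ≤ t := by rw [ht]; positivity
      have hxq : x * q ≤ 2 := by
        have := (le_div_iff₀ hq0).mp hxa
        linarith
      have ht1 : t ≤ 1 := by rw [ht]; nlinarith
      have hmem1 : (1/(q:ℝ)) ∈ Set.Icc (0:ℝ) 1 := ⟨by positivity, by rw [div_le_one hq0]; linarith⟩
      have hmem0 : (0:ℝ) ∈ Set.Icc (0:ℝ) 1 := by norm_num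
      have hconc := (Real.strictConcaveOn_qaryEntropy (q := q)).concaveOn.2 hmem1 hmem0
        ht0 (by linarith : (0:ℝ) ≤ 1 - t) (by ring)
      simp only [smul_eq_mul, Real.qaryEntropy_zero, mul_zero, add_zero] at hconc
      have hcomb : t * (1/(q:ℝ)) = x/2 := by rw [ht]; field_simp
      rw [hcomb, hE] at hconc
      have hEq : t * (Real.log q + (2/(q:ℝ) - 1) * Real.log ((q:ℝ)-1))
          = ((q:ℝ)/2) * x * Real.log q + x * Real.log ((q:ℝ)-1)
            - ((q:ℝ)/2) * x * Real.log ((q:ℝ)-1) := by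
        rw [ht]; field_simp; ring
      have hkey : x * Real.log q ≤ t * (Real.log q + (2/(q:ℝ) - 1) * Real.log ((q:ℝ)-1)) := by
        rw [hEq]
        nlinarith [mul_nonneg (mul_nonneg hx0 (by linarith : (0:ℝ) ≤ (q:ℝ)/2 - 1))
          (sub_nonneg.mpr hlog)]
      have hdiv : x ≤ Real.qaryEntropy q (x/2) / Real.log q :=
        (le_div_iff₀ hLq).mpr (by linarith)
      unfold fAux
      linarith
    · rw [if_neg hxa]
      push_neg at hxa
      unfold LAux
      have h1x : 0 ≤ 1 - x := by linarith [hx.2]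
      have : Real.log ((q:ℝ)-1) / Real.log q ≤ 1 := by
        rw [div_le_one hLq]; exact hlog
      nlinarith
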